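/- Let G be a finite abelian group of even order, H an index-2 subgroup, A = G \ H the nontrivial coset, and s ∈ H an element of order 2. Then the coset A is sum-free, and the graph on vertex set A in which x and y are joined whenever {x, y, t} is a distinct Schur triple for some t ∈ {0, s} has all connected components equal to either a 4-clique {x, x+s, −x, s−x} (when 2x ∉ {0, s}) or a single edge ({x, x+s} when 2x = 0, or {x, −x} when 2x = s). -/

import Mathlib

/-- The distinct link graph of `{0, s}` on the nontrivial coset `A = G \ H`,
realised on vertex set `G`: `x ≠ y` are adjacent iff both lie outside `H` and
`{x, y, t}` is a distinct Schur triple for some `t ∈ {0, s}`. -/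
def cosetLinkGraph (G : Type*) [AddCommGroup G] (H : AddSubgroup G) (s : G) :
    SimpleGraph G where
  Adj x y := x ≠ y ∧ x ∉ H ∧ y ∉ H ∧ ∃ t ∈ ({0, s} : Set G),
    x ≠ t ∧ y ≠ t ∧ (x + y = t ∨ x + t = y ∨ y + t = x)
  symm := by
    constructor
    rintro x y ⟨hxy, hx, hy, t, ht, hxt, hyt, h⟩
    refine ⟨hxy.symm, hy, hx, t, ht, hyt, hxt, ?_⟩
    rcases h with h | h | h
    · exact Or.inl (by rw [add_comm]; exact h)
    · exact Or.inr (Or.inr h)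
    · exact Or.inr (Or.inl h)
  loopless := by constructor; rintro x ⟨h, -⟩; exact h rfl


section Aux
variable {G : Type*} [AddCommGroup G] {H : AddSubgroup G} {s : G}

lemma reachClosed {V : Type*} (Gr : SimpleGraph V) (S : Set V)
    (hcl : ∀ a ∈ S, ∀ b, Gr.Adj a b → b ∈ S) :
    ∀ a ∈ S, ∀ y, Gr.Reachable a y → y ∈ S := by
  have key : ∀ a y, Gr.Walk a y → a ∈ S → y ∈ S := by
    intro a y w
    induction w with
    | nil => exact id
    | cons h p ih => exact fun ha => ih (hcl _ ha _ h)
  exact fun a ha y hr => key a y hr.some ha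

lemma adjIff (hsH : s ∈ H) (hss : s + s = 0) {x y : G} (hx : x ∉ H) :
    (cosetLinkGraph G H s).Adj x y ↔
      y ∉ H ∧ x ≠ y ∧ (y = -x ∨ y = x + s ∨ y = s - x) := by
  have hx0 : x ≠ 0 := fun h => hx (h ▸ H.zero_mem)
  have hxs : x ≠ s := fun h => hx (h ▸ hsH)
  have hns : -s = s := neg_eq_of_add_eq_zero_left hss
  constructor
  · rintro ⟨hxy, -, hy, t, ht, hxt, hyt, h⟩
    refine ⟨hy, hxy, ?_⟩
    rcases ht with rfl | rfl
    · rcases h with h | h | h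
      · exact Or.inl (by rwa [add_comm, add_eq_zero_iff_eq_neg] at h)
      · exact absurd (by simpa using h) hxy
      · exact absurd (by simpa using h.symm) hxy
    · rcases h with h | h | h
      · exact Or.inr (Or.inr (eq_sub_of_add_eq' h))
      · exact Or.inr (Or.inl h.symm)
      · refine Or.inr (Or.inl ?_)
        rw [eq_sub_of_add_eq h, sub_eq_add_neg, hns]
  · rintro ⟨hy, hxy, h⟩
    have hy0 : y ≠ 0 := fun h => hy (h ▸ H.zero_mem)
    have hys : y ≠ s := fun h => hy (h ▸ hsH)
    rcases h with rfl | rfl | rfl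
    · exact ⟨hxy, hx, hy, 0, Or.inl rfl, hx0, hy0, Or.inl (by abel)⟩
    · exact ⟨hxy, hx, hy, s, Or.inr rfl, hxs, hys, Or.inr (Or.inl rfl)⟩
    · exact ⟨hxy, hx, hy, s, Or.inr rfl, hxs, hys, Or.inl (by abel)⟩

lemma adjMk (hsH : s ∈ H) (hss : s + s = 0) {x y : G} (hx : x ∉ H) (hy : y ∉ H)
    (hxy : x ≠ y) (h : y = -x ∨ y = x + s ∨ y = s - x) :
    (cosetLinkGraph G H s).Adj x y :=
  (adjIff hsH hss hx).mpr ⟨hy, hxy, h⟩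

end Aux
/-- for `G` a finite abelian group of even order, `H` an index-2
subgroup, `A = G \ H` and `s ∈ H` of order 2: the coset `A` is sum-free, and every
connected component of the distinct link graph of `{0, s}` on `A` is either a
4-clique `{x, x+s, -x, s-x}` (when `2x ∉ {0, s}`), or the edge `{x, x+s}`
(when `2x = 0`), or the edge `{x, -x}` (when `2x = s`). -/
theorem stmt16 (G : Type*) [AddCommGroup G] [Finite G] (H : AddSubgroup G)
    (hH : H.index = 2) (heven : Even (Nat.card G))
    (s : G) (hsH : s ∈ H) (hs0 : s ≠ 0) (hss : s + s = 0) :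
    (∀ a : G, a ∉ H → ∀ b : G, b ∉ H → a + b ∈ H) ∧
    ∀ x : G, x ∉ H →
      ((x + x ≠ 0 ∧ x + x ≠ s) →
        {y : G | (cosetLinkGraph G H s).Reachable x y} = {x, x + s, -x, s - x} ∧
        (cosetLinkGraph G H s).IsClique {x, x + s, -x, s - x}) ∧
      (x + x = 0 →
        {y : G | (cosetLinkGraph G H s).Reachable x y} = {x, x + s} ∧
        (cosetLinkGraph G H s).Adj x (x + s)) ∧
      (x + x = s →
        {y : G | (cosetLinkGraph G H s).Reachable x y} = {x, -x} ∧
        (cosetLinkGraph G H s).Adj x (-x)) := by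
  have hns : -s = s := neg_eq_of_add_eq_zero_left hss
  refine ⟨fun a ha b hb =>
    (AddSubgroup.add_mem_iff_of_index_two hH).mpr (iff_of_false ha hb), fun x hx => ?_⟩
  have hxs' : x + s ∉ H := fun h => hx (by simpa using H.sub_mem h hsH)
  have hnx : -x ∉ H := fun h => hx (by simpa using H.neg_mem h)
  have hsx : s - x ∉ H := fun h => hnx (by simpa [sub_sub_cancel_left] using H.sub_mem h hsH)
  -- useful identities
  have e1 : -(x + s) = s - x := by rw [neg_add, hns]; abel
  have e2 : (x + s) + s = x := by rw [add_assoc, hss, add_zero]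
  have e3 : s - (x + s) = -x := by abel
  have e5 : (-x) + s = s - x := by abel
  have e6 : s - (-x) = x + s := by abel
  have e7 : -(s - x) = x + s := by rw [neg_sub, sub_eq_add_neg, hns]
  have e8 : (s - x) + s = -x := by
    rw [show (s - x) + s = (s + s) - x by abel, hss]; abel
  have e9 : s - (s - x) = x := by abel
  have d1 : x ≠ x + s := fun h' => hs0 (left_eq_add.mp h')
  refine ⟨?_, ?_, ?_⟩
  · rintro ⟨h0, hs'⟩
    have d2 : x ≠ -x := fun h' => h0 (add_eq_zero_iff_eq_neg.mpr h')
    have d3 : x ≠ s - x := fun h' => hs' (by rw [eq_sub_iff_add_eq] at h'; exact h')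
    have d4 : x + s ≠ -x := fun h' => hs' (by
      have h2 : (x + x) + s = 0 := by rw [show (x+x)+s = (x+s)+x by abel, h']; abel
      have h3 : x + x = -s := eq_neg_of_add_eq_zero_left h2
      rw [h3]; exact hns)
    have d5 : x + s ≠ s - x := fun h' => h0 (by
      calc x + x = (x + s) + (x - s) := by abel
        _ = (s - x) + (x - s) := by rw [h']
        _ = 0 := by abel)
    have d6 : -x ≠ s - x := fun h' => hs0 (by
      calc s = (s - x) + x := by abel
        _ = (-x) + x := by rw [← h']
        _ = 0 := by abel)
    have a1 : (cosetLinkGraph G H s).Adj x (x + s) :=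
      adjMk hsH hss hx hxs' d1 (Or.inr (Or.inl rfl))
    have a2 : (cosetLinkGraph G H s).Adj x (-x) :=
      adjMk hsH hss hx hnx d2 (Or.inl rfl)
    have a3 : (cosetLinkGraph G H s).Adj x (s - x) :=
      adjMk hsH hss hx hsx d3 (Or.inr (Or.inr rfl))
    have a4 : (cosetLinkGraph G H s).Adj (x + s) (-x) :=
      adjMk hsH hss hxs' hnx d4 (Or.inr (Or.inr e3.symm))
    have a5 : (cosetLinkGraph G H s).Adj (x + s) (s - x) :=
      adjMk hsH hss hxs' hsx d5 (Or.inl e1.symm)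
    have a6 : (cosetLinkGraph G H s).Adj (-x) (s - x) :=
      adjMk hsH hss hnx hsx d6 (Or.inr (Or.inl e5.symm))
    constructor
    · apply Set.Subset.antisymm
      · intro y hy
        refine reachClosed _ {x, x + s, -x, s - x} ?_ x (by simp) y hy
        intro a ha b hab
        simp only [Set.mem_insert_iff, Set.mem_singleton_iff] at ha ⊢
        rcases ha with rfl | rfl | rfl | rfl
        · obtain ⟨-, -, rfl | rfl | rfl⟩ := (adjIff hsH hss hx).mp hab <;> tauto
        · obtain ⟨-, -, rfl | rfl | rfl⟩ := (adjIff hsH hss hxs').mp hab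
          · exact Or.inr (Or.inr (Or.inr e1))
          · exact Or.inl e2
          · exact Or.inr (Or.inr (Or.inl e3))
        · obtain ⟨-, -, rfl | rfl | rfl⟩ := (adjIff hsH hss hnx).mp hab
          · exact Or.inl (neg_neg x)
          · exact Or.inr (Or.inr (Or.inr e5))
          · exact Or.inr (Or.inl e6)
        · obtain ⟨-, -, rfl | rfl | rfl⟩ := (adjIff hsH hss hsx).mp hab
          · exact Or.inr (Or.inl e7)
          · exact Or.inr (Or.inr (Or.inl e8))
          · exact Or.inl e9
      · intro y hy
        simp only [Set.mem_insert_iff, Set.mem_singleton_iff] at hy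
        rcases hy with rfl | rfl | rfl | rfl
        exacts [SimpleGraph.Reachable.refl y, a1.reachable, a2.reachable, a3.reachable]
    · intro a ha b hb hab
      simp only [Set.mem_insert_iff, Set.mem_singleton_iff] at ha hb
      rcases ha with rfl | rfl | rfl | rfl <;> rcases hb with rfl | rfl | rfl | rfl <;>
        first
          | exact absurd rfl hab
          | exact a1 | exact a2 | exact a3 | exact a4 | exact a5 | exact a6
          | exact a1.symm | exact a2.symm | exact a3.symm
          | exact a4.symm | exact a5.symm | exact a6.symm
  · intro hxx
    have hnxx : -x = x := neg_eq_of_add_eq_zero_left hxx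
    have a1 : (cosetLinkGraph G H s).Adj x (x + s) :=
      adjMk hsH hss hx hxs' d1 (Or.inr (Or.inl rfl))
    refine ⟨?_, a1⟩
    apply Set.Subset.antisymm
    · intro y hy
      refine reachClosed _ {x, x + s} ?_ x (by simp) y hy
      intro a ha b hab
      simp only [Set.mem_insert_iff, Set.mem_singleton_iff] at ha ⊢
      rcases ha with rfl | rfl
      · obtain ⟨-, -, rfl | rfl | rfl⟩ := (adjIff hsH hss hx).mp hab
        · exact Or.inl hnxx
        · exact Or.inr rfl
        · exact Or.inr (by rw [sub_eq_add_neg, hnxx]; abel)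
      · obtain ⟨-, -, rfl | rfl | rfl⟩ := (adjIff hsH hss hxs').mp hab
        · exact Or.inr (by rw [neg_add, hnxx, hns])
        · exact Or.inl e2
        · exact Or.inl (e3.trans hnxx)
    · intro y hy
      simp only [Set.mem_insert_iff, Set.mem_singleton_iff] at hy
      rcases hy with rfl | rfl
      exacts [SimpleGraph.Reachable.refl y, a1.reachable]
  · intro hxx
    have d2 : x ≠ -x := fun h' =>
      hs0 (hxx.symm.trans (add_eq_zero_iff_eq_neg.mpr h'))
    have k1 : x + s = -x := by
      refine eq_neg_of_add_eq_zero_right ?_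
      rw [show x + (x + s) = (x + x) + s by abel, hxx]; exact hss
    have k2 : s - x = x := by rw [sub_eq_iff_eq_add]; exact hxx.symm
    have k3 : -x + s = x := by rw [← hxx]; abel
    have k4 : s - (-x) = -x := by
      refine eq_neg_of_add_eq_zero_right ?_
      rw [show x + (s - -x) = s + (x + x) by abel, hxx]; exact hss
    have a2 : (cosetLinkGraph G H s).Adj x (-x) :=
      adjMk hsH hss hx hnx d2 (Or.inl rfl)
    refine ⟨?_, a2⟩
    apply Set.Subset.antisymm
    · intro y hy
      refine reachClosed _ {x, -x} ?_ x (by simp) y hy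
      intro a ha b hab
      simp only [Set.mem_insert_iff, Set.mem_singleton_iff] at ha ⊢
      rcases ha with rfl | rfl
      · obtain ⟨-, -, rfl | rfl | rfl⟩ := (adjIff hsH hss hx).mp hab
        · exact Or.inr rfl
        · exact Or.inr k1
        · exact Or.inl k2
      · obtain ⟨-, -, rfl | rfl | rfl⟩ := (adjIff hsH hss hnx).mp hab
        · exact Or.inl (neg_neg x)
        · exact Or.inl k3
        · exact Or.inr k4
    · intro y hy
      simp only [Set.mem_insert_iff, Set.mem_singleton_iff] at hy
      rcases hy with rfl | rfl
      exacts [SimpleGraph.Reachable.refl y, a2.reachable]
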